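/- arXiv:2510.14916 — 3 statements merged into one kernel-verified Lean document; each statement's English description precedes it below -/
import Mathlib

section
/- Let V be an M × N real matrix with M > N, let w ∈ ℝ^M have strictly positive entries, and set η = Vᵀw. Then there exists a vector u ∈ ℝ^M with nonnegative entries, at most N nonzero entries, and Vᵀu = η. -/
open Matrix

private lemma tch_aux (M N : ℕ) (V : Matrix (Fin M) (Fin N) ℝ) :
    ∀ k (u : Fin M → ℝ), (∀ m, 0 ≤ u m) →
      (Finset.univ.filter fun m => u m ≠ 0).card ≤ k →
      ∃ u' : Fin M → ℝ, (∀ m, 0 ≤ u' m) ∧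
        (Finset.univ.filter fun m => u' m ≠ 0).card ≤ N ∧ Vᵀ *ᵥ u' = Vᵀ *ᵥ u := by
  intro k
  induction k with
  | zero =>
    intro u hu hc
    exact ⟨u, hu, le_trans (by omega) (Nat.zero_le N), rfl⟩
  | succ k ih =>
    intro u hu hc
    set s : Finset (Fin M) := Finset.univ.filter fun m => u m ≠ 0 with hs
    by_cases hle : s.card ≤ N
    · exact ⟨u, hu, hle, rfl⟩
    push_neg at hle
    -- the rows of V indexed by s are linearly dependent
    have hnli : ¬ LinearIndependent ℝ (fun m : s => (fun n => V m n : Fin N → ℝ)) := by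
      intro h
      have h1 := h.fintype_card_le_finrank
      rw [Module.finrank_fintype_fun_eq_card, Fintype.card_coe, Fintype.card_fin] at h1
      omega
    rw [Fintype.not_linearIndependent_iff] at hnli
    obtain ⟨g, hg0, i0, hgi0⟩ := hnli
    -- build c supported on s, with Vᵀ c = 0 and some positive entry
    have key : ∃ c : Fin M → ℝ, (∀ m, c m ≠ 0 → u m ≠ 0) ∧ (∃ m, 0 < c m) ∧
        Vᵀ *ᵥ c = 0 := by
      have main : ∀ g : s → ℝ, (∑ i : s, g i • (fun n => V i n : Fin N → ℝ)) = 0 →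
          (∃ i : s, 0 < g i) →
          ∃ c : Fin M → ℝ, (∀ m, c m ≠ 0 → u m ≠ 0) ∧ (∃ m, 0 < c m) ∧
            Vᵀ *ᵥ c = 0 := by
        intro g hg ⟨i, hi⟩
        refine ⟨fun m => if h : m ∈ s then g ⟨m, h⟩ else 0, ?_, ?_, ?_⟩
        · intro m hm
          by_contra hum
          have : m ∉ s := by simp [hs, hum]
          simp [this] at hm
        · exact ⟨i, by simp [i.2, hi]⟩
        · funext n
          have h1 : ∑ m : Fin M, (if h : m ∈ s then g ⟨m, h⟩ else 0) * V m n
              = ∑ m ∈ s, (if h : m ∈ s then g ⟨m, h⟩ else 0) * V m n := by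
            refine (Finset.sum_subset (Finset.subset_univ s) ?_).symm
            intro x _ hx; simp [hx]
          have h2 : ∑ m ∈ s, (if h : m ∈ s then g ⟨m, h⟩ else 0) * V m n
              = ∑ m ∈ s.attach, g m * V m n := by
            rw [← Finset.sum_attach s (fun m => (if h : m ∈ s then g ⟨m, h⟩ else 0) * V m n)]
            exact Finset.sum_congr rfl (fun x _ => by simp [x.2])
          have h3 : ∑ m ∈ s.attach, g m * V (m : Fin M) n = 0 := by
            have := congrFun hg n
            simpa [Finset.sum_apply] using this
          simp only [Matrix.mulVec, Matrix.transpose_apply, dotProduct, Pi.zero_apply]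
          rw [Finset.sum_congr rfl (fun m _ => mul_comm (V m n) _), h1, h2, h3]
      rcases lt_or_gt_of_ne hgi0 with hneg | hpos
      · refine main (-g) ?_ ⟨i0, by simpa using hneg⟩
        simp only [Pi.neg_apply, neg_smul]
        rw [Finset.sum_neg_distrib, hg0, neg_zero]
      · exact main g hg0 ⟨i0, hpos⟩
    obtain ⟨c, hcsupp, ⟨m1, hm1⟩, hckern⟩ := key
    -- minimize u m / c m over positive entries of c
    have hT : (Finset.univ.filter fun m => 0 < c m).Nonempty := ⟨m1, by simp [hm1]⟩
    obtain ⟨m₀, hm₀T, hm₀min⟩ :=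
      (Finset.univ.filter fun m => 0 < c m).exists_min_image (fun m => u m / c m) hT
    have hcm₀ : 0 < c m₀ := by simpa using hm₀T
    set t : ℝ := u m₀ / c m₀ with ht
    have htnn : 0 ≤ t := div_nonneg (hu m₀) hcm₀.le
    set u' : Fin M → ℝ := fun m => u m - t * c m with hu'
    have hu'nn : ∀ m, 0 ≤ u' m := by
      intro m
      by_cases hc : 0 < c m
      · have := hm₀min m (by simp [hc])
        have : t * c m ≤ u m := by
          rw [← le_div_iff₀ hc]; exact this
        simpa [hu'] using this
      · push_neg at hc
        have : t * c m ≤ 0 := mul_nonpos_of_nonneg_of_nonpos htnn hc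
        have := sub_nonneg.mpr (this.trans (hu m))
        simpa [hu'] using this
    have hm₀s : m₀ ∈ s := by
      simp only [hs, Finset.mem_filter, Finset.mem_univ, true_and]
      exact hcsupp m₀ hcm₀.ne'
    have hsubset : (Finset.univ.filter fun m => u' m ≠ 0) ⊆ s.erase m₀ := by
      intro m hm
      simp only [Finset.mem_filter, Finset.mem_univ, true_and] at hm
      rw [Finset.mem_erase]
      constructor
      · intro h
        apply hm
        simp [hu', h, ht, div_mul_cancel₀ _ hcm₀.ne']
      · simp only [hs, Finset.mem_filter, Finset.mem_univ, true_and]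
        intro hum
        apply hm
        by_cases hcm : c m = 0
        · simp [hu', hum, hcm]
        · exact absurd (hcsupp m hcm) (by simp [hum])
    have hcard : (Finset.univ.filter fun m => u' m ≠ 0).card ≤ k := by
      have h1 := Finset.card_le_card hsubset
      rw [Finset.card_erase_of_mem hm₀s] at h1
      omega
    have hmv : Vᵀ *ᵥ u' = Vᵀ *ᵥ u := by
      have : u' = u - t • c := by funext m; simp [hu', smul_eq_mul]
      rw [this, Matrix.mulVec_sub, Matrix.mulVec_smul, hckern, smul_zero, sub_zero]
    obtain ⟨u'', h1, h2, h3⟩ := ih u' hu'nn hcard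
    exact ⟨u'', h1, h2, h3.trans hmv⟩

/-- Finite Tchakaloff theorem, linear-algebraic form. -/
theorem finite_tchakaloff_matrix (M N : ℕ) (hMN : M > N)
    (V : Matrix (Fin M) (Fin N) ℝ) (w : Fin M → ℝ) (hw : ∀ m, 0 < w m) :
    ∃ u : Fin M → ℝ, (∀ m, 0 ≤ u m) ∧ {m | u m ≠ 0}.ncard ≤ N ∧
      Vᵀ *ᵥ u = Vᵀ *ᵥ w := by
  obtain ⟨u, h1, h2, h3⟩ := tch_aux M N V ((Finset.univ.filter fun m => w m ≠ 0).card)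
    w (fun m => (hw m).le) le_rfl
  refine ⟨u, h1, ?_, h3⟩
  have : {m | u m ≠ 0} = ↑(Finset.univ.filter fun m => u m ≠ 0) := by ext m; simp
  rw [this, Set.ncard_coe_finset]
  exact h2
end

section
/- Let w ∈ ℝ^{N+1} with w > 0 and n ∈ ℝ^{N+1} with all entries nonzero, and suppose the index m minimizing w_k/|n_k| over k ∈ [N+1] is unique with optimality gap ε = min_{k ≠ m} (w_k − |n_k/n_m| w_m) > 0. If w̃ ∈ ℝ^{N+1} satisfies ‖w − w̃‖₁ < ε/(1 + ‖n‖₁/|n_m|), then m is also the unique minimizer of w̃_k/|n_k| over k ∈ [N+1]. -/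
/-- Stability of the pruned-index selection: if the optimality gap is `ε` and
the perturbation is small enough, the same index minimizes the perturbed
ratios. -/
theorem pruning_index_stable (N : ℕ) (w n : Fin (N + 1) → ℝ)
    (hw : ∀ k, 0 < w k) (hn : ∀ k, n k ≠ 0)
    (m : Fin (N + 1))
    (hmin : ∀ k, k ≠ m → w m / |n m| < w k / |n k|)
    (ε : ℝ) (hε : 0 < ε)
    (hgap : ∀ k, k ≠ m → ε ≤ w k - |n k / n m| * w m)
    (wt : Fin (N + 1) → ℝ)
    (hpert : ∑ k, |w k - wt k| < ε / (1 + (∑ k, |n k|) / |n m|)) :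
    ∀ k, k ≠ m → wt m / |n m| < wt k / |n k| := by
  intro k hk
  have hnm : 0 < |n m| := abs_pos.mpr (hn m)
  have hnk : 0 < |n k| := abs_pos.mpr (hn k)
  set S := ∑ j, |n j| with hS
  set δ := ∑ j, |w j - wt j| with hδ
  have hδ0 : 0 ≤ δ := Finset.sum_nonneg fun i _ => abs_nonneg _
  have hδk : |w k - wt k| ≤ δ :=
    Finset.single_le_sum (f := fun j => |w j - wt j|) (fun i _ => abs_nonneg _) (Finset.mem_univ k)
  have hδm : |w m - wt m| ≤ δ :=
    Finset.single_le_sum (f := fun j => |w j - wt j|) (fun i _ => abs_nonneg _) (Finset.mem_univ m)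
  have hkS : |n k| ≤ S :=
    Finset.single_le_sum (f := fun j => |n j|) (fun i _ => abs_nonneg _) (Finset.mem_univ k)
  have hSpos : 0 < 1 + S / |n m| := by
    have : 0 ≤ S / |n m| := div_nonneg (le_trans hnk.le hkS) hnm.le
    linarith
  have hgapk := hgap k hk
  rw [abs_div] at hgapk
  set r := |n k| / |n m| with hr
  have hr0 : 0 ≤ r := div_nonneg hnk.le hnm.le
  have hrS : r ≤ S / |n m| := div_le_div_of_nonneg_right hkS hnm.le
  have hδbound : δ * (1 + r) < ε := by
    have h1 : δ * (1 + r) ≤ δ * (1 + S / |n m|) := by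
      apply mul_le_mul_of_nonneg_left _ hδ0
      linarith
    have h2 : δ * (1 + S / |n m|) < ε := by
      rw [lt_div_iff₀ hSpos] at hpert; linarith
    linarith
  have h1 : w k - δ ≤ wt k := by
    have := (abs_le.mp (le_refl |w k - wt k|)).1
    have h := abs_le.mp (le_of_eq (rfl : |w k - wt k| = |w k - wt k|))
    have : w k - wt k ≤ δ := le_trans (le_abs_self _) hδk
    linarith
  have h2 : wt m ≤ w m + δ := by
    have : -(w m - wt m) ≤ δ := le_trans (neg_le_abs _) hδm
    linarith
  have key : 0 < wt k - r * wt m := by nlinarith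
  rw [div_lt_div_iff₀ hnm hnk]
  have hrm : r * |n m| = |n k| := div_mul_cancel₀ _ (ne_of_gt hnm)
  have h3 : r * wt m < wt k := by linarith
  calc wt m * |n k| = r * wt m * |n m| := by rw [← hrm]; ring
    _ < wt k * |n m| := mul_lt_mul_of_pos_right h3 hnm
end

section
/- Let w, w̃ ∈ ℝ^{N+1} with w, w̃ > 0, let n ∈ ℝ^{N+1} with n_m ≠ 0 for a fixed index m, and set c = w_m/n_m and c̃ = w̃_m/n_m. Then ‖(w − c·n) − (w̃ − c̃·n)‖₁ ≤ (1 + ‖n‖₁/|n_m|) · ‖w − w̃‖₁. -/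
/-- Per-iteration error propagation bound for the SCSP algorithm. -/
theorem pruning_error_propagation (N : ℕ) (w wt n : Fin (N + 1) → ℝ)
    (hw : ∀ k, 0 < w k) (hwt : ∀ k, 0 < wt k)
    (m : Fin (N + 1)) (hnm : n m ≠ 0) :
    ∑ k, |(w k - (w m / n m) * n k) - (wt k - (wt m / n m) * n k)| ≤
      (1 + (∑ k, |n k|) / |n m|) * ∑ k, |w k - wt k| := by
  have hnm' : 0 < |n m| := abs_pos.mpr hnm
  have key : ∀ k, |(w k - (w m / n m) * n k) - (wt k - (wt m / n m) * n k)|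
      ≤ |w k - wt k| + (|w m - wt m| / |n m|) * |n k| := by
    intro k
    have h1 : (w k - (w m / n m) * n k) - (wt k - (wt m / n m) * n k)
        = (w k - wt k) - ((w m - wt m) / n m) * n k := by ring
    rw [h1]
    calc |(w k - wt k) - ((w m - wt m) / n m) * n k|
        ≤ |w k - wt k| + |((w m - wt m) / n m) * n k| := abs_sub _ _
      _ = |w k - wt k| + (|w m - wt m| / |n m|) * |n k| := by
          rw [abs_mul, abs_div]
  calc ∑ k, |(w k - (w m / n m) * n k) - (wt k - (wt m / n m) * n k)|
      ≤ ∑ k, (|w k - wt k| + (|w m - wt m| / |n m|) * |n k|) :=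
        Finset.sum_le_sum fun k _ => key k
    _ = ∑ k, |w k - wt k| + (|w m - wt m| / |n m|) * ∑ k, |n k| := by
        rw [Finset.sum_add_distrib, Finset.mul_sum]
    _ ≤ ∑ k, |w k - wt k| + ((∑ k, |w k - wt k|) / |n m|) * ∑ k, |n k| := by
        gcongr
        exact Finset.single_le_sum (f := fun k => |w k - wt k|)
            (fun k _ => abs_nonneg _) (Finset.mem_univ m)
    _ = (1 + (∑ k, |n k|) / |n m|) * ∑ k, |w k - wt k| := by ring
end
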